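/- Let Y be a closed subspace of a real Banach space X such that every point of S_Y is a k-smooth point of X (i.e., dim S(X*, y) ≤ k − 1 for all y ∈ S_Y). Then every reflexive closed subspace Z of Y has property-(k-U) in X. -/

import Mathlib

open NormedSpace Metric Set

namespace Paper

variable {X : Type*} [NormedAddCommGroup X] [NormedSpace ℝ X]

/-- The restriction of a continuous linear functional to a subspace. -/
noncomputable def restr (Y : Submodule ℝ X) (f : StrongDual ℝ X) : StrongDual ℝ ↥Y :=
  f.comp Y.subtypeL

/-- The annihilator `Y⊥` of a subspace `Y` in the dual. -/
def ann (Y : Submodule ℝ X) : Set (StrongDual ℝ X) := {f | ∀ y ∈ Y, f y = 0}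

/-- The set of norm-preserving (Hahn–Banach) extensions of `g : Y* ` to `X`. -/
def HB (Y : Submodule ℝ X) (g : StrongDual ℝ ↥Y) : Set (StrongDual ℝ X) :=
  {f | (∀ y : Y, f (y : X) = g y) ∧ ‖f‖ = ‖g‖}

/-- Best approximations to `x` from a set `A`. -/
def bestApprox {E : Type*} [NormedAddCommGroup E] (A : Set E) (x : E) : Set E :=
  {z ∈ A | ‖x - z‖ = infDist x A}

/-- Property-(U): every functional on `Y` has a unique norm-preserving extension to `X`. -/
def propU (Y : Submodule ℝ X) : Prop :=
  ∀ g : StrongDual ℝ ↥Y, ∃! f : StrongDual ℝ X, f ∈ HB Y g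

/-- `Y# `: the set of functionals whose norm equals the norm of their restriction to `Y`. -/
def sharp (Y : Submodule ℝ X) : Set (StrongDual ℝ X) := {f | ‖f‖ = ‖restr Y f‖}

/-- Property-(HB), stated via the decomposition `X* = Y# ⊕ Y⊥`. -/
def propHB (Y : Submodule ℝ X) : Prop :=
  (∀ f ∈ sharp Y, ∀ g ∈ sharp Y, f + g ∈ sharp Y) ∧
  (∀ (c : ℝ), ∀ f ∈ sharp Y, c • f ∈ sharp Y) ∧
  (∀ f : StrongDual ℝ X, ∃ g ∈ sharp Y, ∃ h ∈ ann Y, f = g + h) ∧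
  (∀ g ∈ sharp Y, ∀ h ∈ ann Y, h ≠ 0 → ‖g‖ < ‖g + h‖ ∧ ‖h‖ ≤ ‖g + h‖)

end Paper

open Paper

namespace Paper

/-- Property-(k-U): every norm-one functional on `Y` has a set of norm-preserving
extensions to `X` of dimension at most `k − 1`. -/
def propkU {X : Type*} [NormedAddCommGroup X] [NormedSpace ℝ X]
    (Y : Submodule ℝ X) (k : ℕ) : Prop :=
  ∀ g : StrongDual ℝ ↥Y, ‖g‖ = 1 → ∀ f ∈ HB Y g,
    Module.rank ℝ ↥(Submodule.span ℝ ((· - f) '' HB Y g)) < (k : Cardinal)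

end Paper

/-- if every point of `S_Y` is a `k`-smooth point of `X`
(`dim S(X*, y) ≤ k − 1` where `S(X*, y) = {f ∈ S_{X*} : f(y) = ‖y‖}`), then every
reflexive closed subspace `Z` of `Y` has property-(k-U) in `X`. -/
theorem stmt19 {X : Type*} [NormedAddCommGroup X] [NormedSpace ℝ X] [CompleteSpace X]
    (Y : Submodule ℝ X) (hYc : IsClosed (Y : Set X)) (k : ℕ)
    (hsmooth : ∀ y : X, y ∈ Y → ‖y‖ = 1 →
      ∀ f : StrongDual ℝ X, ‖f‖ = 1 → f y = ‖y‖ →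
        Module.rank ℝ ↥(Submodule.span ℝ
          ((· - f) '' {φ : StrongDual ℝ X | ‖φ‖ = 1 ∧ φ y = ‖y‖})) < (k : Cardinal)) :
    ∀ Z : Submodule ℝ X, Z ≤ Y → IsClosed (Z : Set X) →
      Function.Surjective (inclusionInDoubleDual ℝ ↥Z) → propkU Z k := by
  intro Z hZY hZc hrefl g hg f hf
  -- g ≠ 0
  have hgne : g ≠ 0 := by
    intro h; rw [h, ContinuousLinearMap.opNorm_zero] at hg; exact one_ne_zero hg.symm
  -- norm attainment via reflexivity
  obtain ⟨Ψ, hΨ1, hΨg⟩ := exists_dual_vector ℝ g (by rw [hg]; norm_num)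
  obtain ⟨z₀, hz₀⟩ := hrefl Ψ
  have hz₀norm : ‖z₀‖ = 1 := by
    have := (inclusionInDoubleDualLi (𝕜 := ℝ) (E := ↥Z)).norm_map z₀
    rw [show (inclusionInDoubleDualLi (𝕜 := ℝ) (E := ↥Z)) z₀
        = inclusionInDoubleDual ℝ ↥Z z₀ from rfl, hz₀, hΨ1] at this
    exact this.symm
  have hgz₀ : g z₀ = 1 := by
    have : inclusionInDoubleDual ℝ ↥Z z₀ g = g z₀ := dual_def ℝ ↥Z z₀ g
    rw [hz₀] at this; rw [← this, hΨg, hg]; norm_num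
  have hz₀X : ‖(z₀ : X)‖ = 1 := by rw [← hz₀norm]; rfl
  have hz₀Y : (z₀ : X) ∈ Y := hZY z₀.2
  -- f is in the smooth point's support set
  have hfnorm : ‖f‖ = 1 := by rw [hf.2, hg]
  have hfz₀ : f (z₀ : X) = ‖(z₀ : X)‖ := by rw [hf.1 z₀, hgz₀, hz₀X]
  -- HB Z g ⊆ support set
  have hsub : HB Z g ⊆ {φ : StrongDual ℝ X | ‖φ‖ = 1 ∧ φ (z₀ : X) = ‖(z₀ : X)‖} := by
    intro φ hφ
    exact ⟨by rw [hφ.2, hg], by rw [hφ.1 z₀, hgz₀, hz₀X]⟩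
  have hspan : Submodule.span ℝ ((· - f) '' HB Z g) ≤
      Submodule.span ℝ ((· - f) '' {φ : StrongDual ℝ X | ‖φ‖ = 1 ∧ φ (z₀ : X) = ‖(z₀ : X)‖}) :=
    Submodule.span_mono (Set.image_mono hsub)
  exact lt_of_le_of_lt (Submodule.rank_mono hspan)
    (hsmooth (z₀ : X) hz₀Y hz₀X f hfnorm hfz₀)
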